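/- Let n_x, x ∈ X, be a bounded measurable family of positive integers, X = X₋ ∪ X₊ a measurable partition, q a probability measure on X, and (a_j)_{j∈ℤ} a sequence of non-negative reals. Assume: (a) 0 < S ≤ ∫_{X₋} n_x dq − ∫_{X₊} n_x dq; (b) for every t = 0,…,n: ∫_{X₋} Σ_{j=t+1}^{t+n_x} a_j dq(x) ≤ ∫_{X₊} Σ_{j=t−n_x+1}^{t} a_j dq(x). Let n₋ = sup{n_x : x ∈ X₋} and n₊ = sup{n_x : x ∈ X₊}. Then Σ_{j=1}^{n} a_j ≤ ((n₋+n₊)/S) · Σ_{j=−n₊+1}^{0} a_j. -/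

import Mathlib

open MeasureTheory

lemma icc_eq_ioc (a b : ℤ) : Finset.Icc (a+1) b = Finset.Ioc a b := by
  ext j; simp only [Finset.mem_Icc, Finset.mem_Ioc]; omega

lemma icc_one_eq_ioc (b : ℤ) : Finset.Icc (1:ℤ) b = Finset.Ioc 0 b := by
  rw [← icc_eq_ioc]; norm_num

lemma sum_ioc_split (a : ℤ → ℝ) {x y z : ℤ} (h1 : x ≤ y) (h2 : y ≤ z) :
    ∑ j ∈ Finset.Ioc x z, a j = ∑ j ∈ Finset.Ioc x y, a j + ∑ j ∈ Finset.Ioc y z, a j := by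
  rw [← Finset.Ioc_union_Ioc_eq_Ioc h1 h2, Finset.sum_union]
  rw [Finset.disjoint_left]
  intro j hj hj'
  simp only [Finset.mem_Ioc] at *
  omega

lemma sum_range_cast (n : ℕ) (g : ℤ → ℝ) :
    ∑ t ∈ Finset.range (n+1), g t = ∑ t ∈ Finset.Icc (0:ℤ) n, g t := by
  rw [show Finset.Icc (0:ℤ) n = (Finset.range (n+1)).map ⟨Nat.cast, Nat.cast_injective⟩ by
    ext s
    simp only [Finset.mem_map, Finset.mem_range, Finset.mem_Icc, Function.Embedding.coeFn_mk]
    constructor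
    · rintro ⟨h0, h1⟩; exact ⟨s.toNat, by omega, by omega⟩
    · rintro ⟨t, ht, rfl⟩; omega]
  rw [Finset.sum_map]
  rfl

lemma lemA (a : ℤ → ℝ) (ha : ∀ j, 0 ≤ a j) (n m : ℕ) :
    (m:ℝ) * ∑ j ∈ Finset.Ioc (m:ℤ) (n:ℤ), a j
      ≤ ∑ t ∈ Finset.Icc (0:ℤ) (n:ℤ), ∑ j ∈ Finset.Ioc t (t + (m:ℤ)), a j := by
  have hcomm : ∑ t ∈ Finset.Icc (0:ℤ) (n:ℤ), ∑ j ∈ Finset.Ioc t (t + (m:ℤ)), a j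
      = ∑ j ∈ Finset.Ioc (0:ℤ) ((n:ℤ)+m),
          ∑ _t ∈ Finset.Icc (max 0 (j - m)) (min (n:ℤ) (j-1)), a j := by
    refine Finset.sum_comm' ?_
    intro t j
    simp only [Finset.mem_Icc, Finset.mem_Ioc, le_max_iff, max_le_iff, le_min_iff, min_le_iff]
    omega
  rw [hcomm]
  have hsub : Finset.Ioc (m:ℤ) (n:ℤ) ⊆ Finset.Ioc (0:ℤ) ((n:ℤ)+m) := by
    intro j hj; simp only [Finset.mem_Ioc] at *; omega
  calc (m:ℝ) * ∑ j ∈ Finset.Ioc (m:ℤ) (n:ℤ), a j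
      = ∑ j ∈ Finset.Ioc (m:ℤ) (n:ℤ),
          ∑ _t ∈ Finset.Icc (max 0 (j - m)) (min (n:ℤ) (j-1)), a j := by
        rw [Finset.mul_sum]
        refine Finset.sum_congr rfl ?_
        intro j hj
        simp only [Finset.mem_Ioc] at hj
        rw [Finset.sum_const, nsmul_eq_mul]
        congr 2
        rw [Int.card_Icc]
        omega
    _ ≤ _ := by
        refine Finset.sum_le_sum_of_subset_of_nonneg hsub ?_
        intro j _ _
        exact Finset.sum_nonneg fun _ _ => ha j

lemma lemB (a : ℤ → ℝ) (ha : ∀ j, 0 ≤ a j) (n m np : ℕ) (hmnp : m ≤ np) :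
    ∑ t ∈ Finset.Icc (0:ℤ) (n:ℤ), ∑ j ∈ Finset.Ioc (t - (m:ℤ)) t, a j
      ≤ (m:ℝ) * ∑ j ∈ Finset.Ioc (-(np:ℤ)) (n:ℤ), a j := by
  have hcomm : ∑ t ∈ Finset.Icc (0:ℤ) (n:ℤ), ∑ j ∈ Finset.Ioc (t - (m:ℤ)) t, a j
      = ∑ j ∈ Finset.Ioc (-(m:ℤ)) (n:ℤ),
          ∑ _t ∈ Finset.Icc (max 0 j) (min (n:ℤ) (j+m-1)), a j := by
    refine Finset.sum_comm' ?_
    intro t j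
    simp only [Finset.mem_Icc, Finset.mem_Ioc, le_max_iff, max_le_iff, le_min_iff, min_le_iff]
    omega
  rw [hcomm]
  have hsub : Finset.Ioc (-(m:ℤ)) (n:ℤ) ⊆ Finset.Ioc (-(np:ℤ)) (n:ℤ) := by
    intro j hj; simp only [Finset.mem_Ioc] at *; omega
  calc ∑ j ∈ Finset.Ioc (-(m:ℤ)) (n:ℤ),
          ∑ _t ∈ Finset.Icc (max 0 j) (min (n:ℤ) (j+m-1)), a j
      ≤ ∑ j ∈ Finset.Ioc (-(m:ℤ)) (n:ℤ), (m:ℝ) * a j := by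
        refine Finset.sum_le_sum ?_
        intro j hj
        simp only [Finset.mem_Ioc] at hj
        rw [Finset.sum_const, nsmul_eq_mul]
        have hc : ((Finset.Icc (max 0 j) (min (n:ℤ) (j+(m:ℤ)-1))).card : ℝ) ≤ (m:ℝ) := by
          have h : (Finset.Icc (max 0 j) (min (n:ℤ) (j+(m:ℤ)-1))).card ≤ m := by
            rw [Int.card_Icc]; omega
          exact_mod_cast h
        exact mul_le_mul_of_nonneg_right hc (ha j)
    _ ≤ (m:ℝ) * ∑ j ∈ Finset.Ioc (-(np:ℤ)) (n:ℤ), a j := by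
        rw [Finset.mul_sum]
        refine Finset.sum_le_sum_of_subset_of_nonneg hsub ?_
        intro j _ _
        exact mul_nonneg (by positivity) (ha j)

lemma intOn {X : Type*} [MeasurableSpace X] (q : Measure X) [IsFiniteMeasure q]
    {s : Set X} (hs : MeasurableSet s) {nx : X → ℕ} (hnmeas : Measurable nx)
    (B : ℕ) (hB : ∀ x ∈ s, nx x ≤ B) (g : ℕ → ℝ) :
    IntegrableOn (fun x => g (nx x)) s q := by
  have hmeas : Measurable fun x => g (nx x) := measurable_from_nat.comp hnmeas
  refine Integrable.mono' (integrable_const (∑ k ∈ Finset.range (B+1), ‖g k‖))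
    hmeas.aestronglyMeasurable ?_
  refine (ae_restrict_iff' hs).2 (ae_of_all _ ?_)
  intro x hx
  exact Finset.single_le_sum (f := fun k => ‖g k‖) (fun i _ => norm_nonneg _)
    (Finset.mem_range.2 (Nat.lt_succ_of_le (hB x hx)))

/-- Lemma `l.sete`: the main combinatorial estimate. -/
theorem stmt2 {X : Type*} [MeasurableSpace X] (q : Measure X) [IsProbabilityMeasure q]
    (Xm Xp : Set X) (hXm : MeasurableSet Xm) (hXp : MeasurableSet Xp)
    (hpart : Xm ∪ Xp = Set.univ) (hdisj : Disjoint Xm Xp)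
    (nx : X → ℕ) (hnpos : ∀ x, 0 < nx x) (hnmeas : Measurable nx)
    (nm np : ℕ) (hnm : ∀ x ∈ Xm, nx x ≤ nm) (hnp : ∀ x ∈ Xp, nx x ≤ np)
    (a : ℤ → ℝ) (ha : ∀ j, 0 ≤ a j)
    (S : ℝ) (hS : 0 < S) (n : ℕ)
    (hSa : S ≤ (∫ x in Xm, (nx x : ℝ) ∂q) - ∫ x in Xp, (nx x : ℝ) ∂q)
    (hb : ∀ t : ℕ, t ≤ n →
      (∫ x in Xm, (∑ j ∈ Finset.Icc ((t : ℤ) + 1) ((t : ℤ) + (nx x : ℤ)), a j) ∂q)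
        ≤ ∫ x in Xp, (∑ j ∈ Finset.Icc ((t : ℤ) - (nx x : ℤ) + 1) (t : ℤ), a j) ∂q) :
    (∑ j ∈ Finset.Icc (1 : ℤ) (n : ℤ), a j)
      ≤ ((nm + np : ℝ) / S) * ∑ j ∈ Finset.Icc (-(np : ℤ) + 1) 0, a j := by
  have hT0 : (0:ℝ) ≤ ∑ j ∈ Finset.Ioc (0:ℤ) (n:ℤ), a j := Finset.sum_nonneg fun j _ => ha j
  have hP0 : (0:ℝ) ≤ ∑ j ∈ Finset.Ioc (-(np:ℤ)) (0:ℤ), a j := Finset.sum_nonneg fun j _ => ha j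
  set T : ℝ := ∑ j ∈ Finset.Ioc (0:ℤ) (n:ℤ), a j with hT
  set P : ℝ := ∑ j ∈ Finset.Ioc (-(np:ℤ)) (0:ℤ), a j with hP
  have hIccT : ∑ j ∈ Finset.Icc (1 : ℤ) (n : ℤ), a j = T := by
    rw [hT, icc_one_eq_ioc]
  have hIccP : ∑ j ∈ Finset.Icc (-(np : ℤ) + 1) 0, a j = P := by
    rw [hP, icc_eq_ioc]
  rw [hIccT, hIccP]
  -- aggregated functions
  set fm : X → ℝ := fun x => ∑ t ∈ Finset.range (n+1),
      ∑ j ∈ Finset.Icc ((t:ℤ) + 1) ((t:ℤ) + (nx x : ℤ)), a j with hfm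
  set fp : X → ℝ := fun x => ∑ t ∈ Finset.range (n+1),
      ∑ j ∈ Finset.Icc ((t:ℤ) - (nx x : ℤ) + 1) (t:ℤ), a j with hfp
  have intm : ∀ g : ℕ → ℝ, IntegrableOn (fun x => g (nx x)) Xm q :=
    fun g => intOn q hXm hnmeas nm hnm g
  have intp : ∀ g : ℕ → ℝ, IntegrableOn (fun x => g (nx x)) Xp q :=
    fun g => intOn q hXp hnmeas np hnp g
  -- Step 1 : ∫ fm ≤ ∫ fp
  have step1 : ∫ x in Xm, fm x ∂q ≤ ∫ x in Xp, fp x ∂q := by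
    have em : (∫ x in Xm, fm x ∂q) = ∑ t ∈ Finset.range (n+1),
        ∫ x in Xm, (∑ j ∈ Finset.Icc ((t:ℤ) + 1) ((t:ℤ) + (nx x : ℤ)), a j) ∂q := by
      rw [hfm]
      exact integral_finset_sum _ (fun t _ =>
        intm (fun k => ∑ j ∈ Finset.Icc ((t:ℤ) + 1) ((t:ℤ) + (k : ℤ)), a j))
    have ep : (∫ x in Xp, fp x ∂q) = ∑ t ∈ Finset.range (n+1),
        ∫ x in Xp, (∑ j ∈ Finset.Icc ((t:ℤ) - (nx x : ℤ) + 1) (t:ℤ), a j) ∂q := by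
      rw [hfp]
      exact integral_finset_sum _ (fun t _ =>
        intp (fun k => ∑ j ∈ Finset.Icc ((t:ℤ) - (k : ℤ) + 1) (t:ℤ), a j))
    rw [em, ep]
    refine Finset.sum_le_sum ?_
    intro t ht
    exact hb t (Nat.lt_succ_iff.mp (Finset.mem_range.mp ht))
  -- Step 2 : pointwise lower bound on Xm
  have hlow : ∀ x ∈ Xm,
      (nx x : ℝ) * T - (nm:ℝ) * (∑ j ∈ Finset.Ioc (0:ℤ) (nx x : ℤ), a j) ≤ fm x := by
    intro x hx
    set m := nx x with hm
    have h1 : (m:ℝ) * ∑ j ∈ Finset.Ioc (m:ℤ) (n:ℤ), a j ≤ fm x := by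
      have hA := lemA a ha n m
      rw [hfm]
      calc (m:ℝ) * ∑ j ∈ Finset.Ioc (m:ℤ) (n:ℤ), a j
          ≤ ∑ t ∈ Finset.Icc (0:ℤ) (n:ℤ), ∑ j ∈ Finset.Ioc t (t + (m:ℤ)), a j := hA
        _ = ∑ t ∈ Finset.range (n+1), ∑ j ∈ Finset.Icc ((t:ℤ) + 1) ((t:ℤ) + (m:ℤ)), a j := by
            rw [← sum_range_cast n (fun t => ∑ j ∈ Finset.Ioc t (t + (m:ℤ)), a j)]
            exact Finset.sum_congr rfl fun t _ => by rw [icc_eq_ioc]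
    have h2 : T ≤ (∑ j ∈ Finset.Ioc (0:ℤ) (m:ℤ), a j) + ∑ j ∈ Finset.Ioc (m:ℤ) (n:ℤ), a j := by
      rcases le_or_gt (m:ℤ) (n:ℤ) with h | h
      · rw [hT, sum_ioc_split a (by omega : (0:ℤ) ≤ (m:ℤ)) h]
      · have h3 : T ≤ ∑ j ∈ Finset.Ioc (0:ℤ) (m:ℤ), a j := by
          rw [hT]
          refine Finset.sum_le_sum_of_subset_of_nonneg ?_ (fun j _ _ => ha j)
          intro j hj; simp only [Finset.mem_Ioc] at *; omega
        have h4 : (0:ℝ) ≤ ∑ j ∈ Finset.Ioc (m:ℤ) (n:ℤ), a j :=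
          Finset.sum_nonneg fun j _ => ha j
        linarith
    have hmnm : (m:ℝ) ≤ (nm:ℝ) := by exact_mod_cast hnm x hx
    have hF0 : (0:ℝ) ≤ ∑ j ∈ Finset.Ioc (0:ℤ) (m:ℤ), a j :=
      Finset.sum_nonneg fun j _ => ha j
    have hm0 : (0:ℝ) ≤ (m:ℝ) := by positivity
    nlinarith [mul_le_mul_of_nonneg_left h2 hm0, mul_le_mul_of_nonneg_right hmnm hF0]
  -- Step 3 : pointwise upper bound on Xp
  have hPT : ∑ j ∈ Finset.Ioc (-(np:ℤ)) (n:ℤ), a j = P + T := by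
    rw [hP, hT]
    exact sum_ioc_split a (by omega : (-(np:ℤ)) ≤ 0) (by omega : (0:ℤ) ≤ (n:ℤ))
  have hup : ∀ x ∈ Xp, fp x ≤ (nx x : ℝ) * (P + T) := by
    intro x hx
    set m := nx x with hm
    have h1 := lemB a ha n m np (hnp x hx)
    rw [hPT] at h1
    rw [hfp]
    calc ∑ t ∈ Finset.range (n+1), ∑ j ∈ Finset.Icc ((t:ℤ) - (m:ℤ) + 1) (t:ℤ), a j
        = ∑ t ∈ Finset.Icc (0:ℤ) (n:ℤ), ∑ j ∈ Finset.Ioc (t - (m:ℤ)) t, a j := by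
          rw [← sum_range_cast n (fun t => ∑ j ∈ Finset.Ioc (t - (m:ℤ)) t, a j)]
          exact Finset.sum_congr rfl fun t _ => by rw [icc_eq_ioc]
      _ ≤ (m:ℝ) * (P + T) := h1
  -- integrated lower bound
  have low_int : (∫ x in Xm, (nx x : ℝ) ∂q) * T
      - (nm:ℝ) * ∫ x in Xm, (∑ j ∈ Finset.Ioc (0:ℤ) (nx x : ℤ), a j) ∂q
      ≤ ∫ x in Xm, fm x ∂q := by
    have i1 : IntegrableOn (fun x => (nx x : ℝ) * T) Xm q := intm (fun k => (k:ℝ) * T)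
    have i2 : IntegrableOn (fun x => (nm:ℝ) * ∑ j ∈ Finset.Ioc (0:ℤ) (nx x : ℤ), a j) Xm q :=
      intm (fun k => (nm:ℝ) * ∑ j ∈ Finset.Ioc (0:ℤ) (k:ℤ), a j)
    have i3 : IntegrableOn fm Xm q := by
      rw [hfm]
      exact intm (fun k => ∑ t ∈ Finset.range (n+1),
        ∑ j ∈ Finset.Icc ((t:ℤ) + 1) ((t:ℤ) + (k:ℤ)), a j)
    have hmono : ∫ x in Xm,
        ((nx x : ℝ) * T - (nm:ℝ) * ∑ j ∈ Finset.Ioc (0:ℤ) (nx x : ℤ), a j) ∂q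
        ≤ ∫ x in Xm, fm x ∂q := setIntegral_mono_on (i1.sub i2) i3 hXm hlow
    calc (∫ x in Xm, (nx x : ℝ) ∂q) * T
        - (nm:ℝ) * ∫ x in Xm, (∑ j ∈ Finset.Ioc (0:ℤ) (nx x : ℤ), a j) ∂q
        = ∫ x in Xm,
            ((nx x : ℝ) * T - (nm:ℝ) * ∑ j ∈ Finset.Ioc (0:ℤ) (nx x : ℤ), a j) ∂q := by
          rw [integral_sub i1 i2, integral_mul_const, integral_const_mul]
      _ ≤ ∫ x in Xm, fm x ∂q := hmono
  -- integrated upper bound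
  have up_int : ∫ x in Xp, fp x ∂q ≤ (∫ x in Xp, (nx x : ℝ) ∂q) * (P + T) := by
    have i4 : IntegrableOn fp Xp q := by
      rw [hfp]
      exact intp (fun k => ∑ t ∈ Finset.range (n+1),
        ∑ j ∈ Finset.Icc ((t:ℤ) - (k:ℤ) + 1) (t:ℤ), a j)
    have i5 : IntegrableOn (fun x => (nx x : ℝ) * (P + T)) Xp q :=
      intp (fun k => (k:ℝ) * (P + T))
    have hmono : ∫ x in Xp, fp x ∂q ≤ ∫ x in Xp, ((nx x : ℝ) * (P + T)) ∂q :=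
      setIntegral_mono_on i4 i5 hXp hup
    calc ∫ x in Xp, fp x ∂q ≤ ∫ x in Xp, ((nx x : ℝ) * (P + T)) ∂q := hmono
      _ = (∫ x in Xp, (nx x : ℝ) ∂q) * (P + T) := integral_mul_const _ _
  -- q Xp ≤ 1 in real form
  have hq1 : (q Xp).toReal ≤ 1 := by
    have h := ENNReal.toReal_mono (by simp) (prob_le_one (μ := q) (s := Xp))
    simpa using h
  -- ∫_{Xm} F ≤ P via hb 0
  have hb0 := hb 0 (Nat.zero_le n)
  simp only [Nat.cast_zero, zero_add, zero_sub, icc_one_eq_ioc] at hb0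
  have hJP : ∫ x in Xm, (∑ j ∈ Finset.Ioc (0:ℤ) (nx x : ℤ), a j) ∂q ≤ P := by
    refine le_trans hb0 ?_
    have hpt : ∀ x ∈ Xp, (∑ j ∈ Finset.Icc (-(nx x : ℤ) + 1) (0:ℤ), a j) ≤ P := by
      intro x hx
      rw [hP]
      refine Finset.sum_le_sum_of_subset_of_nonneg ?_ (fun j _ _ => ha j)
      intro j hj
      have h := hnp x hx
      simp only [Finset.mem_Icc, Finset.mem_Ioc] at *
      omega
    calc ∫ x in Xp, (∑ j ∈ Finset.Icc (-(nx x : ℤ) + 1) (0:ℤ), a j) ∂q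
        ≤ ∫ _x in Xp, P ∂q :=
          setIntegral_mono_on
            (intp (fun k => ∑ j ∈ Finset.Icc (-(k:ℤ) + 1) (0:ℤ), a j))
            (integrable_const P) hXp hpt
      _ = (q Xp).toReal * P := by rw [setIntegral_const, smul_eq_mul]; rfl
      _ ≤ P := by nlinarith
  -- ∫_{Xp} nx ≤ np
  have hIp : ∫ x in Xp, (nx x : ℝ) ∂q ≤ (np:ℝ) := by
    calc ∫ x in Xp, (nx x : ℝ) ∂q
        ≤ ∫ _x in Xp, (np:ℝ) ∂q :=
          setIntegral_mono_on (intp (fun k => (k:ℝ))) (integrable_const _) hXp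
            (fun x hx => by exact_mod_cast hnp x hx)
      _ = (q Xp).toReal * (np:ℝ) := by rw [setIntegral_const, smul_eq_mul]; rfl
      _ ≤ (np:ℝ) := by nlinarith [Nat.cast_nonneg (α := ℝ) np]
  have hIp0 : (0:ℝ) ≤ ∫ x in Xp, (nx x : ℝ) ∂q :=
    setIntegral_nonneg hXp (fun x _ => by positivity)
  have hJ0 : (0:ℝ) ≤ ∫ x in Xm, (∑ j ∈ Finset.Ioc (0:ℤ) (nx x : ℤ), a j) ∂q :=
    setIntegral_nonneg hXm (fun x _ => Finset.sum_nonneg fun j _ => ha j)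
  -- final arithmetic
  have key : T * S ≤ ((nm:ℝ) + np) * P := by
    have c1 := le_trans low_int (le_trans step1 up_int)
    set Im := ∫ x in Xm, (nx x : ℝ) ∂q
    set Ip := ∫ x in Xp, (nx x : ℝ) ∂q
    set J := ∫ x in Xm, (∑ j ∈ Finset.Ioc (0:ℤ) (nx x : ℤ), a j) ∂q
    nlinarith [mul_le_mul_of_nonneg_left (sub_nonneg.2 hSa) hT0,
      mul_le_mul_of_nonneg_left hJP (Nat.cast_nonneg (α := ℝ) nm),
      mul_le_mul_of_nonneg_right hIp hP0]
  rw [div_mul_eq_mul_div, le_div_iff₀ hS]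
  linarith
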